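/- Let P = (B₁, …, B_ℓ) be a ρ-consistent path decomposition of G_ρ and let τ be a linear extension of ρ. For each position p define S_p = {v ∈ B_p : v >_τ max_τ(L_p)} (with S_p = B_p if L_p = ∅). Then S_p contains all vertices introduced at position p, i.e., I(p) ⊆ S_p. -/

import Mathlib

def cocompGraph {α : Type*} (r : α → α → Prop) : SimpleGraph α where
  Adj x y := x ≠ y ∧ ¬ r x y ∧ ¬ r y x
  symm := ⟨fun x y h => ⟨h.1.symm, h.2.2, h.2.1⟩⟩
  loopless := ⟨fun x h => h.1 rfl⟩

structure PathDecomp {V : Type*} (G : SimpleGraph V) where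
  len : ℕ
  bag : Fin len → Set V
  cover : ∀ v, ∃ i, v ∈ bag i
  edge : ∀ u v, G.Adj u v → ∃ i, u ∈ bag i ∧ v ∈ bag i
  convex : ∀ i j k : Fin len, i ≤ j → j ≤ k → ∀ v, v ∈ bag i → v ∈ bag k → v ∈ bag j

noncomputable def pathwidth {V : Type*} (G : SimpleGraph V) : ℕ :=
  sInf {w : ℕ | ∃ P : PathDecomp G, ∀ i, (P.bag i).ncard ≤ w + 1}

theorem introduced_in_Sp {α : Type*} (r : α → α → Prop)
    (hr : IsPartialOrder α r) (P : PathDecomp (cocompGraph r))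
    (hcons : ∀ x y : α, r x y → x ≠ y →
      ∃ i j : Fin P.len, x ∈ P.bag j ∧ y ∈ P.bag i ∧ j ≤ i)
    (τ : LinearOrder α) (hext : ∀ x y : α, r x y → x ≠ y → τ.lt x y)
    (p : Fin P.len) (u : α) (hu : u ∈ P.bag p)
    (hu2 : ∀ j : Fin P.len, j < p → u ∉ P.bag j)
    (w : α) (hw1 : ∃ i, w ∈ P.bag i)
    (hw2 : ∀ i : Fin P.len, w ∈ P.bag i → i < p) :
    τ.lt w u := by
  have hne : w ≠ u := by
    rintro rfl
    exact absurd (hw2 p hu) (lt_irrefl p)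
  by_cases hwu : r w u
  · exact hext w u hwu hne
  · by_cases huw : r u w
    · obtain ⟨i, j, huj, hwi, hji⟩ := hcons u w huw hne.symm
      exact absurd huj (hu2 j (lt_of_le_of_lt hji (hw2 i hwi)))
    · have hadj : (cocompGraph r).Adj u w := ⟨hne.symm, huw, hwu⟩
      obtain ⟨i, hui, hwi⟩ := P.edge u w hadj
      exact absurd hui (hu2 i (hw2 i hwi))
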